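/- The map f : U(1)×U(1)×U(1)×SU(2)×SU(2) → S(U(1)×U(1)×U(2)×U(2)) given by f(a,b,c,A,B) = diag(a^{-2}, b^{-2}, c^{-1}A, (abc)B) is a surjective group homomorphism whose kernel has order 8 and is isomorphic to Z_2 × Z_2 × Z_2. -/

import Mathlib

noncomputable section

set_option maxRecDepth 100000
set_option maxHeartbeats 1000000

/-- The special unitary group over index type `I`, as a subgroup of the unitary group. -/
def SU (I : Type) [Fintype I] [DecidableEq I] :
    Subgroup (Matrix.unitaryGroup I ℂ) :=
  MonoidHom.ker (Matrix.detMonoidHom.comp (Matrix.unitaryGroup I ℂ).subtype)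

/-- Underlying matrix of an element of `SU I`. -/
def mat {I : Type} [Fintype I] [DecidableEq I] (A : SU I) : Matrix I I ℂ := A.1.1

/-- The domain group `U(1) × U(1) × U(1) × SU(2) × SU(2)`. -/
abbrev G4 := Circle × Circle × Circle × SU (Fin 2) × SU (Fin 2)

/-- The index type for `6×6` matrices, grouped in blocks of sizes `1,1,2,2`. -/
abbrev I4 := Fin 1 ⊕ (Fin 1 ⊕ (Fin 2 ⊕ Fin 2))

/-- The map `f(a,b,c,A,B) = diag(a⁻², b⁻², c⁻¹A, (abc)B)`, at the level of matrices. -/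
def f4 (x : G4) : Matrix I4 I4 ℂ :=
  Matrix.fromBlocks (Matrix.of fun _ _ => ((x.1 : ℂ))⁻¹ ^ 2) 0 0
    (Matrix.fromBlocks (Matrix.of fun _ _ => ((x.2.1 : ℂ))⁻¹ ^ 2) 0 0
      (Matrix.fromBlocks (((x.2.2.1 : ℂ))⁻¹ • mat x.2.2.2.1) 0 0
        (((x.1 : ℂ) * (x.2.1 : ℂ) * (x.2.2.1 : ℂ)) • mat x.2.2.2.2)))

/-- The subgroup `S(U(1)×U(1)×U(2)×U(2))` of `SU(6)`: block diagonal matrices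
`diag(s,t,P₁,P₂)` with `s,t ∈ U(1)`, `P₁,P₂ ∈ U(2)` and `s·t·det P₁·det P₂ = 1`. -/
def SU1U1U2U2 : Set (SU I4) :=
  {A | (mat A).toBlocks₁₂ = 0 ∧ (mat A).toBlocks₂₁ = 0 ∧
    ((mat A).toBlocks₂₂).toBlocks₁₂ = 0 ∧ ((mat A).toBlocks₂₂).toBlocks₂₁ = 0 ∧
    (((mat A).toBlocks₂₂).toBlocks₂₂).toBlocks₁₂ = 0 ∧
    (((mat A).toBlocks₂₂).toBlocks₂₂).toBlocks₂₁ = 0 ∧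
    ‖mat A (Sum.inl 0) (Sum.inl 0)‖ = 1 ∧
    ‖mat A (Sum.inr (Sum.inl 0)) (Sum.inr (Sum.inl 0))‖ = 1 ∧
    (((mat A).toBlocks₂₂).toBlocks₂₂).toBlocks₁₁ ∈ Matrix.unitaryGroup (Fin 2) ℂ ∧
    (((mat A).toBlocks₂₂).toBlocks₂₂).toBlocks₂₂ ∈ Matrix.unitaryGroup (Fin 2) ℂ ∧
    mat A (Sum.inl 0) (Sum.inl 0) * mat A (Sum.inr (Sum.inl 0)) (Sum.inr (Sum.inl 0)) *
      ((((mat A).toBlocks₂₂).toBlocks₂₂).toBlocks₁₁).det *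
      ((((mat A).toBlocks₂₂).toBlocks₂₂).toBlocks₂₂).det = 1}

/-! ### Auxiliary lemmas -/

section Aux
open Matrix Complex

lemma mat_mul {I : Type} [Fintype I] [DecidableEq I] (A B : SU I) :
    mat (A * B) = mat A * mat B := rfl

lemma det_mat {I : Type} [Fintype I] [DecidableEq I] (A : SU I) : (mat A).det = 1 := A.2

lemma mat_mem {I : Type} [Fintype I] [DecidableEq I] (A : SU I) :
    mat A ∈ Matrix.unitaryGroup I ℂ := A.1.2

lemma mem_SU_iff {I : Type} [Fintype I] [DecidableEq I] (A : Matrix.unitaryGroup I ℂ) :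
    A ∈ SU I ↔ (A : Matrix I I ℂ).det = 1 := Iff.rfl

lemma mat_injective {I : Type} [Fintype I] [DecidableEq I] {A B : SU I}
    (h : mat A = mat B) : A = B := Subtype.ext (Subtype.ext h)

def mkC (z : ℂ) (h : ‖z‖ = 1) : Circle := ⟨z, mem_sphere_zero_iff_norm.2 h⟩

@[simp] lemma mkC_coe (z : ℂ) (h : ‖z‖ = 1) : (mkC z h : ℂ) = z := rfl

@[simp] lemma circle_norm (z : Circle) : ‖(z:ℂ)‖ = 1 := by
  simpa using Circle.norm_coe z

lemma star_mul_self_of_norm (c : ℂ) (hc : ‖c‖ = 1) : star c * c = 1 := by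
  rw [RCLike.star_def, mul_comm, Complex.mul_conj]
  norm_cast
  simp [Complex.normSq_eq_norm_sq, hc]

lemma smul_mem_unitary {n : Type*} [Fintype n] [DecidableEq n] (c : ℂ) (hc : ‖c‖ = 1)
    {M : Matrix n n ℂ} (hM : M ∈ Matrix.unitaryGroup n ℂ) :
    c • M ∈ Matrix.unitaryGroup n ℂ := by
  have hcc := star_mul_self_of_norm c hc
  constructor
  · rw [star_smul, Matrix.smul_mul, Matrix.mul_smul, smul_smul, hM.1, hcc, one_smul]
  · rw [star_smul, Matrix.smul_mul, Matrix.mul_smul, smul_smul, mul_comm, hM.2, hcc, one_smul]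

lemma const_mem_unitary (k : ℂ) (hk : ‖k‖ = 1) :
    (Matrix.of fun _ _ => k : Matrix (Fin 1) (Fin 1) ℂ) ∈ Matrix.unitaryGroup (Fin 1) ℂ := by
  have h : (Matrix.of fun _ _ => k : Matrix (Fin 1) (Fin 1) ℂ) = k • 1 := by
    ext i j; fin_cases i; fin_cases j; simp
  rw [h]
  exact smul_mem_unitary k hk (Submonoid.one_mem _)

lemma fromBlocks_mem_unitary {n m : Type*} [Fintype n] [DecidableEq n] [Fintype m] [DecidableEq m]
    {A : Matrix n n ℂ} {D : Matrix m m ℂ} (hA : A ∈ Matrix.unitaryGroup n ℂ)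
    (hD : D ∈ Matrix.unitaryGroup m ℂ) :
    Matrix.fromBlocks A 0 0 D ∈ Matrix.unitaryGroup (n ⊕ m) ℂ := by
  have hA1 := hA.1; have hD1 := hD.1; have hA2 := hA.2; have hD2 := hD.2
  rw [Matrix.star_eq_conjTranspose] at hA1 hD1 hA2 hD2
  constructor
  · rw [Matrix.star_eq_conjTranspose, Matrix.fromBlocks_conjTranspose, Matrix.fromBlocks_multiply]
    simp [hA1, hD1, ← Matrix.fromBlocks_one]
  · rw [Matrix.star_eq_conjTranspose, Matrix.fromBlocks_conjTranspose, Matrix.fromBlocks_multiply]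
    simp [hA2, hD2, ← Matrix.fromBlocks_one]

lemma const_mul (k k' : ℂ) :
    (Matrix.of fun _ _ => k : Matrix (Fin 1) (Fin 1) ℂ) * (Matrix.of fun _ _ => k') =
      Matrix.of fun _ _ => k * k' := by
  ext i j
  simp [Matrix.mul_apply]

lemma det_const (k : ℂ) : (Matrix.of fun _ _ => k : Matrix (Fin 1) (Fin 1) ℂ).det = k := by
  simp [Matrix.det_fin_one]

/-! ### `f4` is a homomorphism -/

theorem f4_hom (x y : G4) : f4 (x * y) = f4 x * f4 y := by
  simp only [f4, Matrix.fromBlocks_multiply, Matrix.mul_zero, Matrix.zero_mul,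
    add_zero, zero_add, const_mul, Matrix.smul_mul, Matrix.mul_smul, smul_smul,
    mat_mul, Prod.fst_mul, Prod.snd_mul, Circle.coe_mul]
  rw [Matrix.fromBlocks_inj]
  refine ⟨by ext i j; simp [mul_pow]; ring, rfl, rfl, ?_⟩
  rw [Matrix.fromBlocks_inj]
  refine ⟨by ext i j; simp [mul_pow]; ring, rfl, rfl, ?_⟩
  rw [Matrix.fromBlocks_inj]
  exact ⟨by rw [mul_inv, mul_comm], by simp, by simp, by congr 1; ring⟩

/-! ### `f4` lands in `SU(6)` -/

lemma f4_mem_unitary (x : G4) : f4 x ∈ Matrix.unitaryGroup I4 ℂ := by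
  refine fromBlocks_mem_unitary (const_mem_unitary _ (by simp)) ?_
  refine fromBlocks_mem_unitary (const_mem_unitary _ (by simp)) ?_
  exact fromBlocks_mem_unitary (smul_mem_unitary _ (by simp) (mat_mem _))
    (smul_mem_unitary _ (by simp) (mat_mem _))

lemma f4_det (x : G4) : (f4 x).det = 1 := by
  have h1 : ((x.1:ℂ)) ≠ 0 := Circle.coe_ne_zero _
  have h2 : ((x.2.1:ℂ)) ≠ 0 := Circle.coe_ne_zero _
  have h3 : ((x.2.2.1:ℂ)) ≠ 0 := Circle.coe_ne_zero _
  rw [f4, Matrix.det_fromBlocks_zero₂₁, Matrix.det_fromBlocks_zero₂₁,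
    Matrix.det_fromBlocks_zero₂₁, det_const, det_const, Matrix.det_smul, Matrix.det_smul,
    det_mat, det_mat]
  simp only [Fintype.card_fin, mul_one]
  field_simp

def f4SU (x : G4) : SU I4 := ⟨⟨f4 x, f4_mem_unitary x⟩, (mem_SU_iff _).2 (f4_det x)⟩

lemma mat_f4SU (x : G4) : mat (f4SU x) = f4 x := rfl

lemma f4SU_mem (x : G4) : f4SU x ∈ SU1U1U2U2 := by
  have hm := mat_f4SU x
  have h1 : ((x.1:ℂ)) ≠ 0 := Circle.coe_ne_zero _
  have h2 : ((x.2.1:ℂ)) ≠ 0 := Circle.coe_ne_zero _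
  have h3 : ((x.2.2.1:ℂ)) ≠ 0 := Circle.coe_ne_zero _
  refine ⟨?_, ?_, ?_, ?_, ?_, ?_, ?_, ?_, ?_, ?_, ?_⟩ <;>
    simp only [hm, f4, Matrix.toBlocks_fromBlocks₁₂, Matrix.toBlocks_fromBlocks₂₁,
      Matrix.toBlocks_fromBlocks₂₂, Matrix.toBlocks_fromBlocks₁₁,
      Matrix.fromBlocks_apply₁₁, Matrix.of_apply]
  · simp
  · simp
  · exact smul_mem_unitary _ (by simp) (mat_mem _)
  · exact smul_mem_unitary _ (by simp) (mat_mem _)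
  · rw [Matrix.det_smul, Matrix.det_smul, det_mat, det_mat]
    simp only [Fintype.card_fin, mul_one, Matrix.fromBlocks_apply₂₂, Matrix.fromBlocks_apply₁₁, Matrix.of_apply]
    field_simp

/-! ### Surjectivity -/

lemma exists_circle_sq (s : ℂ) (hs : ‖s‖ = 1) : ∃ a : Circle, ((a:ℂ)) ^ 2 = s := by
  obtain ⟨v, hv⟩ := IsAlgClosed.exists_pow_nat_eq s (n := 2) (by norm_num)
  have hn : ‖v‖ = 1 := by
    have h2 : ‖v‖ ^ 2 = 1 := by rw [← norm_pow, hv, hs]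
    nlinarith [norm_nonneg v]
  exact ⟨mkC v hn, hv⟩

lemma norm_det_of_unitary {M : Matrix (Fin 2) (Fin 2) ℂ}
    (hM : M ∈ Matrix.unitaryGroup (Fin 2) ℂ) : ‖M.det‖ = 1 := by
  have h := Matrix.det_of_mem_unitary hM
  have h1 : star M.det * M.det = 1 := h.1
  rw [RCLike.star_def, mul_comm, Complex.mul_conj] at h1
  have hsq : Complex.normSq M.det = 1 := by exact_mod_cast h1
  have h2 : ‖M.det‖ ^ 2 = 1 := by
    rw [Complex.sq_norm, hsq]
  nlinarith [norm_nonneg M.det]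

lemma blockdiag_decomp (M : Matrix I4 I4 ℂ) (h1 : M.toBlocks₁₂ = 0) (h2 : M.toBlocks₂₁ = 0)
    (h3 : M.toBlocks₂₂.toBlocks₁₂ = 0) (h4 : M.toBlocks₂₂.toBlocks₂₁ = 0)
    (h5 : M.toBlocks₂₂.toBlocks₂₂.toBlocks₁₂ = 0) (h6 : M.toBlocks₂₂.toBlocks₂₂.toBlocks₂₁ = 0) :
    M = Matrix.fromBlocks (Matrix.of fun _ _ => M (Sum.inl 0) (Sum.inl 0)) 0 0
      (Matrix.fromBlocks (Matrix.of fun _ _ => M (Sum.inr (Sum.inl 0)) (Sum.inr (Sum.inl 0))) 0 0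
        (Matrix.fromBlocks (M.toBlocks₂₂.toBlocks₂₂.toBlocks₁₁) 0 0
          (M.toBlocks₂₂.toBlocks₂₂.toBlocks₂₂))) := by
  conv_lhs => rw [← Matrix.fromBlocks_toBlocks M]
  rw [h1, h2, Matrix.fromBlocks_inj]
  refine ⟨by ext i j; fin_cases i; fin_cases j; rfl, rfl, rfl, ?_⟩
  conv_lhs => rw [← Matrix.fromBlocks_toBlocks M.toBlocks₂₂]
  rw [h3, h4, Matrix.fromBlocks_inj]
  refine ⟨by ext i j; fin_cases i; fin_cases j; rfl, rfl, rfl, ?_⟩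
  conv_lhs => rw [← Matrix.fromBlocks_toBlocks M.toBlocks₂₂.toBlocks₂₂]
  rw [h5, h6]

theorem f4_surj (A : SU I4) (hA : A ∈ SU1U1U2U2) : ∃ x, f4 x = mat A := by
  obtain ⟨h1, h2, h3, h4, h5, h6, h7, h8, h9, h10, h11⟩ := hA
  set s : ℂ := mat A (Sum.inl 0) (Sum.inl 0) with hs
  set t : ℂ := mat A (Sum.inr (Sum.inl 0)) (Sum.inr (Sum.inl 0)) with ht
  set P₁ := (((mat A).toBlocks₂₂).toBlocks₂₂).toBlocks₁₁ with hP₁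
  set P₂ := (((mat A).toBlocks₂₂).toBlocks₂₂).toBlocks₂₂ with hP₂
  have hdec := blockdiag_decomp (mat A) h1 h2 h3 h4 h5 h6
  have hsne : s ≠ 0 := by intro h; rw [h] at h7; simp at h7
  have htne : t ≠ 0 := by intro h; rw [h] at h8; simp at h8
  have hd1 : ‖P₁.det‖ = 1 := norm_det_of_unitary h9
  have hd2 : ‖P₂.det‖ = 1 := norm_det_of_unitary h10
  have hd1ne : P₁.det ≠ 0 := by intro h; rw [h] at hd1; simp at hd1
  have hd2ne : P₂.det ≠ 0 := by intro h; rw [h] at hd2; simp at hd2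
  obtain ⟨a, ha⟩ := exists_circle_sq s⁻¹ (by rw [norm_inv, h7]; norm_num)
  obtain ⟨b, hb⟩ := exists_circle_sq t⁻¹ (by rw [norm_inv, h8]; norm_num)
  obtain ⟨c, hc⟩ := exists_circle_sq P₁.det⁻¹ (by rw [norm_inv, hd1]; norm_num)
  have hcne : ((c:ℂ)) ≠ 0 := Circle.coe_ne_zero _
  have habc : ((a:ℂ) * b * c) ^ 2 = P₂.det := by
    have e : ((a:ℂ) * b * c) ^ 2 = (s * t * P₁.det)⁻¹ := by
      rw [mul_pow, mul_pow, ha, hb, hc, mul_inv, mul_inv]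
    exact e.trans (inv_eq_of_mul_eq_one_right h11)
  have habcne : ((a:ℂ) * b * c) ≠ 0 :=
    mul_ne_zero (mul_ne_zero (Circle.coe_ne_zero _) (Circle.coe_ne_zero _)) hcne
  have hdetA' : ((c:ℂ) • P₁).det = 1 := by
    rw [Matrix.det_smul, Fintype.card_fin, hc, inv_mul_cancel₀ hd1ne]
  have hdetB' : (((a:ℂ) * b * c)⁻¹ • P₂).det = 1 := by
    rw [Matrix.det_smul, Fintype.card_fin, inv_pow, habc, inv_mul_cancel₀ hd2ne]
  refine ⟨(a, b, c,
    ⟨⟨(c:ℂ) • P₁, smul_mem_unitary _ (circle_norm c) h9⟩, (mem_SU_iff _).2 hdetA'⟩,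
    ⟨⟨((a:ℂ) * b * c)⁻¹ • P₂,
      smul_mem_unitary _ (by rw [norm_inv]; simp) h10⟩, (mem_SU_iff _).2 hdetB'⟩), ?_⟩
  rw [hdec, f4, Matrix.fromBlocks_inj]
  refine ⟨?_, rfl, rfl, ?_⟩
  · ext i j; show ((a:ℂ))⁻¹ ^ 2 = s; rw [inv_pow, ha, inv_inv]
  rw [Matrix.fromBlocks_inj]
  refine ⟨?_, rfl, rfl, ?_⟩
  · ext i j; show ((b:ℂ))⁻¹ ^ 2 = t; rw [inv_pow, hb, inv_inv]
  rw [Matrix.fromBlocks_inj]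
  refine ⟨?_, rfl, rfl, ?_⟩
  · show ((c:ℂ))⁻¹ • ((c:ℂ) • P₁) = P₁
    rw [smul_smul, inv_mul_cancel₀ hcne, one_smul]
  · show ((a:ℂ) * b * c) • (((a:ℂ) * b * c)⁻¹ • P₂) = P₂
    rw [smul_smul, mul_inv_cancel₀ habcne, one_smul]

/-! ### Kernel -/

lemma const_eq_one_iff (k : ℂ) :
    (Matrix.of fun _ _ => k : Matrix (Fin 1) (Fin 1) ℂ) = 1 ↔ k = 1 := by
  constructor
  · intro h
    have := congrFun (congrFun h 0) 0
    simpa using this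
  · rintro rfl
    ext i j; fin_cases i; fin_cases j; simp

lemma f4_eq_one_iff (x : G4) : f4 x = 1 ↔
    ((x.1:ℂ)) ^ 2 = 1 ∧ ((x.2.1:ℂ)) ^ 2 = 1 ∧
      mat x.2.2.2.1 = (x.2.2.1:ℂ) • 1 ∧
      mat x.2.2.2.2 = ((x.1:ℂ) * (x.2.1:ℂ) * (x.2.2.1:ℂ))⁻¹ • 1 := by
  rw [f4, show (1 : Matrix I4 I4 ℂ) =
      Matrix.fromBlocks 1 0 0 (Matrix.fromBlocks 1 0 0 (Matrix.fromBlocks 1 0 0 1)) by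
    simp [Matrix.fromBlocks_one]]
  rw [Matrix.fromBlocks_inj, Matrix.fromBlocks_inj, Matrix.fromBlocks_inj]
  have h1 : ((x.1:ℂ)) ≠ 0 := Circle.coe_ne_zero _
  have h2 : ((x.2.1:ℂ)) ≠ 0 := Circle.coe_ne_zero _
  have h3 : ((x.2.2.1:ℂ)) ≠ 0 := Circle.coe_ne_zero _
  constructor
  · rintro ⟨e1, -, -, e2, -, -, e3, -, -, e4⟩
    rw [const_eq_one_iff] at e1 e2
    refine ⟨?_, ?_, ?_, ?_⟩
    · field_simp at e1; simpa using e1.symm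
    · field_simp at e2; simpa using e2.symm
    · have := congrArg (fun M => (x.2.2.1:ℂ) • M) e3
      simpa [smul_smul, mul_inv_cancel₀ h3] using this
    · have hne : ((x.1:ℂ) * (x.2.1:ℂ) * (x.2.2.1:ℂ)) ≠ 0 :=
        mul_ne_zero (mul_ne_zero h1 h2) h3
      have e4' := congrArg (fun M => ((x.1:ℂ) * (x.2.1:ℂ) * (x.2.2.1:ℂ))⁻¹ • M) e4
      simp only [smul_smul] at e4'
      rw [inv_mul_cancel₀ hne, one_smul] at e4'
      exact e4'
  · rintro ⟨e1, e2, e3, e4⟩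
    have hne : ((x.1:ℂ) * (x.2.1:ℂ) * (x.2.2.1:ℂ)) ≠ 0 :=
      mul_ne_zero (mul_ne_zero h1 h2) h3
    refine ⟨?_, rfl, rfl, ?_, rfl, rfl, ?_, rfl, rfl, ?_⟩
    · rw [const_eq_one_iff, inv_pow, e1, inv_one]
    · rw [const_eq_one_iff, inv_pow, e2, inv_one]
    · rw [e3, smul_smul, inv_mul_cancel₀ h3, one_smul]
    · rw [e4, smul_smul, mul_inv_cancel₀ hne, one_smul]

lemma sq_eq_one_cases {z : ℂ} (h : z ^ 2 = 1) : z = 1 ∨ z = -1 := by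
  have : (z - 1) * (z + 1) = 0 := by linear_combination h
  rcases mul_eq_zero.1 this with h' | h'
  · left; exact sub_eq_zero.1 h'
  · right; exact eq_neg_of_add_eq_zero_left h'

lemma ker_a_sq {x : G4} (hx : f4 x = 1) : ((x.1 : ℂ)) ^ 2 = 1 :=
  ((f4_eq_one_iff x).1 hx).1

lemma ker_b_sq {x : G4} (hx : f4 x = 1) : ((x.2.1 : ℂ)) ^ 2 = 1 :=
  ((f4_eq_one_iff x).1 hx).2.1

lemma ker_c_sq {x : G4} (hx : f4 x = 1) : ((x.2.2.1 : ℂ)) ^ 2 = 1 := by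
  obtain ⟨-, -, e3, -⟩ := (f4_eq_one_iff x).1 hx
  have hdet := det_mat x.2.2.2.1
  rw [e3, Matrix.det_smul, Matrix.det_one] at hdet
  simp only [smul_eq_mul, mul_one, Fintype.card_fin] at hdet
  exact hdet

def scalarSU2 (z : Circle) (hz : ((z:ℂ)) ^ 2 = 1) : SU (Fin 2) :=
  ⟨⟨(z:ℂ) • 1, smul_mem_unitary _ (circle_norm z) (Submonoid.one_mem _)⟩,
    (mem_SU_iff _).2 (by simp [Matrix.det_smul, hz])⟩

@[simp] lemma mat_scalarSU2 (z : Circle) (hz : ((z:ℂ)) ^ 2 = 1) :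
    mat (scalarSU2 z hz) = (z:ℂ) • 1 := rfl

abbrev M2 := Multiplicative (ZMod 2)

open scoped Classical in
def gsgn (z : ℂ) : M2 := if z = 1 then 1 else Multiplicative.ofAdd 1

def cir (v : M2) : Circle := if v = 1 then 1 else mkC (-1) (by norm_num)

lemma cir_coe (v : M2) : ((cir v : ℂ)) = if v = 1 then 1 else -1 := by
  unfold cir; split <;> simp

lemma cir_sq (v : M2) : ((cir v : ℂ)) ^ 2 = 1 := by
  rw [cir_coe]; split <;> norm_num

lemma gsgn_cir (v : M2) : gsgn (cir v) = v := by
  rw [cir_coe]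
  unfold gsgn
  rcases eq_or_ne v 1 with h | h
  · simp [h]
  · rw [if_neg h, if_neg (by norm_num)]
    have hall : ∀ u : M2, u ≠ 1 → Multiplicative.ofAdd 1 = u := by decide
    exact hall v h

lemma cir_gsgn {z : ℂ} (hz : z ^ 2 = 1) : ((cir (gsgn z) : ℂ)) = z := by
  rw [cir_coe]
  rcases sq_eq_one_cases hz with rfl | rfl
  · simp [gsgn]
  · rw [if_neg]
    unfold gsgn
    rw [if_neg (by norm_num)]
    exact (by decide : (Multiplicative.ofAdd (1 : ZMod 2)) ≠ 1)

lemma gsgn_mul {z w : ℂ} (hz : z ^ 2 = 1) (hw : w ^ 2 = 1) :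
    gsgn (z * w) = gsgn z * gsgn w := by
  rcases sq_eq_one_cases hz with rfl | rfl <;> rcases sq_eq_one_cases hw with rfl | rfl <;>
    · unfold gsgn
      norm_num
      try decide

def kelt (u v w : M2) : G4 :=
  (cir u, cir v, cir w, scalarSU2 (cir w) (cir_sq w),
    scalarSU2 ((cir u) * (cir v) * (cir w))⁻¹ (by
      rw [Circle.coe_inv]
      simp only [Circle.coe_mul]
      rw [inv_pow, mul_pow, mul_pow, cir_sq, cir_sq, cir_sq]
      norm_num))

lemma kelt_mem_ker (u v w : M2) : f4 (kelt u v w) = 1 := by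
  rw [f4_eq_one_iff]
  refine ⟨cir_sq u, cir_sq v, rfl, ?_⟩
  simp only [kelt, mat_scalarSU2, Circle.coe_inv, Circle.coe_mul]

end Aux

/-! ### Main theorem -/

/-- `f(a,b,c,A,B) = diag(a⁻², b⁻², c⁻¹A, (abc)B)` is a surjective group homomorphism from
`U(1)×U(1)×U(1)×SU(2)×SU(2)` onto `S(U(1)×U(1)×U(2)×U(2))` whose kernel has order `8`
and is isomorphic to `ℤ₂ × ℤ₂ × ℤ₂`. -/
theorem f4_surjective_hom_kernel_z2z2z2 :
    -- `f` is a group homomorphism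
    (∀ x y : G4, f4 (x * y) = f4 x * f4 y) ∧
    -- `f` takes values in `S(U(1)×U(1)×U(2)×U(2))`
    (∀ x, ∃ A : SU I4, A ∈ SU1U1U2U2 ∧ mat A = f4 x) ∧
    -- `f` is surjective onto `S(U(1)×U(1)×U(2)×U(2))`
    (∀ A ∈ SU1U1U2U2, ∃ x, f4 x = mat A) ∧
    -- the kernel has order `8` and is isomorphic to `ℤ₂ × ℤ₂ × ℤ₂`
    (∀ K : Subgroup G4, (K : Set G4) = {x | f4 x = 1} →
      Nat.card K = 8 ∧
      Nonempty (K ≃* Multiplicative (ZMod 2) × Multiplicative (ZMod 2) ×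
        Multiplicative (ZMod 2))) := by
  refine ⟨f4_hom, fun x => ⟨f4SU x, f4SU_mem x, rfl⟩, f4_surj, ?_⟩
  intro K hK
  have hmem : ∀ x : G4, x ∈ K ↔ f4 x = 1 := by
    intro x
    rw [← SetLike.mem_coe, hK]
    exact Iff.rfl
  have e : K ≃* M2 × M2 × M2 := by
    refine
      { toFun := fun k => (gsgn (k.1.1 : ℂ), gsgn (k.1.2.1 : ℂ), gsgn (k.1.2.2.1 : ℂ)),
        invFun := fun u => ⟨kelt u.1 u.2.1 u.2.2, (hmem _).2 (kelt_mem_ker _ _ _)⟩,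
        left_inv := ?_, right_inv := ?_, map_mul' := ?_ }
    · rintro ⟨⟨a, b, c, A, B⟩, hk⟩
      have hk' : f4 (a, b, c, A, B) = 1 := (hmem _).1 hk
      obtain ⟨ha, hb, hA, hB⟩ := (f4_eq_one_iff _).1 hk'
      have hc := ker_c_sq hk'
      apply Subtype.ext
      show kelt (gsgn (a:ℂ)) (gsgn (b:ℂ)) (gsgn (c:ℂ)) = (a, b, c, A, B)
      have e1 : cir (gsgn (a:ℂ)) = a := Circle.ext (cir_gsgn ha)
      have e2 : cir (gsgn (b:ℂ)) = b := Circle.ext (cir_gsgn hb)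
      have e3 : cir (gsgn (c:ℂ)) = c := Circle.ext (cir_gsgn hc)
      refine Prod.ext e1 (Prod.ext e2 (Prod.ext e3 (Prod.ext ?_ ?_)))
      · apply mat_injective
        simp only [kelt, mat_scalarSU2]
        rw [hA, e3]
      · apply mat_injective
        simp only [kelt, mat_scalarSU2]
        rw [hB, Circle.coe_inv, Circle.coe_mul, Circle.coe_mul, e1, e2, e3]
    · rintro ⟨u, v, w⟩
      show (gsgn ((cir u : ℂ)), gsgn ((cir v : ℂ)), gsgn ((cir w : ℂ))) = (u, v, w)
      rw [gsgn_cir, gsgn_cir, gsgn_cir]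
    · rintro ⟨x, hx⟩ ⟨y, hy⟩
      have hx' := (hmem _).1 hx
      have hy' := (hmem _).1 hy
      have h1 : gsgn ((x.1 * y.1 : Circle) : ℂ) = gsgn (x.1 : ℂ) * gsgn (y.1 : ℂ) := by
        rw [Circle.coe_mul]
        exact gsgn_mul (ker_a_sq hx') (ker_a_sq hy')
      have h2 : gsgn ((x.2.1 * y.2.1 : Circle) : ℂ) =
          gsgn (x.2.1 : ℂ) * gsgn (y.2.1 : ℂ) := by
        rw [Circle.coe_mul]
        exact gsgn_mul (ker_b_sq hx') (ker_b_sq hy')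
      have h3 : gsgn ((x.2.2.1 * y.2.2.1 : Circle) : ℂ) =
          gsgn (x.2.2.1 : ℂ) * gsgn (y.2.2.1 : ℂ) := by
        rw [Circle.coe_mul]
        exact gsgn_mul (ker_c_sq hx') (ker_c_sq hy')
      exact Prod.ext h1 (Prod.ext h2 h3)
  refine ⟨?_, ⟨e⟩⟩
  rw [Nat.card_congr e.toEquiv]
  simp [Nat.card_eq_fintype_card]
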